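/- arXiv:1903.11585 — 2 statements merged into one kernel-verified Lean document; each statement's English description precedes it below -/
import Mathlib

section
/- Generalized Fatou lemma with varying measures: let ν_k be finite measures on a measurable space converging setwise to a measure ν (i.e., ν_k(E) → ν(E) for every measurable E), and let f_k be nonnegative measurable functions converging pointwise a.e. (with respect to ν) to f. Then ∫ f dν ≤ liminf_k ∫ f_k dν_k. -/
open MeasureTheory Filter Topology
open scoped ENNReal

noncomputable section

/-- Euclidean space ℝⁿ. -/
abbrev En (n : ℕ) := EuclideanSpace ℝ (Fin n)

/-- The (s,p)-nonlocal gradient `D_{s,p}u(x,y) = (u x − u y)/|x−y|^{n/p+s}`. -/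
def Dsp (n : ℕ) (s p : ℝ) (u : En n → ℝ) (z : En n × En n) : ℝ :=
  (u z.1 - u z.2) / ‖z.1 - z.2‖ ^ ((n : ℝ) / p + s)

/-- The Gagliardo seminorm `|u|_{s,p}`. -/
def gagSem (n : ℕ) (s p : ℝ) (u : En n → ℝ) : ℝ :=
  (∫ z : En n × En n, |u z.1 - u z.2| ^ p / ‖z.1 - z.2‖ ^ ((n : ℝ) + s * p)) ^ (1 / p)

/-- Membership in `W^{s,p}(ℝⁿ)`. -/
def MemWsp (n : ℕ) (s p : ℝ) (u : En n → ℝ) : Prop :=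
  MemLp u (ENNReal.ofReal p) volume ∧
  Integrable (fun z : En n × En n =>
    |u z.1 - u z.2| ^ p / ‖z.1 - z.2‖ ^ ((n : ℝ) + s * p)) volume

/-- The full `W^{s,p}(ℝⁿ)` norm. -/
def normWsp (n : ℕ) (s p : ℝ) (u : En n → ℝ) : ℝ :=
  ((∫ x : En n, |u x| ^ p) + (gagSem n s p u) ^ p) ^ (1 / p)

/-- Membership in `W^{s,p}_0(Ω)`: fractional Sobolev functions vanishing a.e. outside Ω. -/
def MemW0 (n : ℕ) (s p : ℝ) (Ω : Set (En n)) (u : En n → ℝ) : Prop :=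
  MemWsp n s p u ∧ ∀ᵐ x : En n, x ∉ Ω → u x = 0

/-- The class `𝒜_{λ,Λ}` of symmetric coefficients bounded between `lam` and `Lam`. -/
def MemA (n : ℕ) (lam Lam : ℝ) (a : En n × En n → ℝ) : Prop :=
  Measurable a ∧ ∀ᵐ z : En n × En n, a z = a (z.2, z.1) ∧ lam ≤ a z ∧ a z ≤ Lam

/-- A bounded (continuous) linear functional on `W^{s,p}_0(Ω)`, i.e. an element
of `W^{−s,p'}(Ω)`, represented by a linear map bounded w.r.t. the Gagliardo seminorm. -/
def IsDualW0 (n : ℕ) (s p : ℝ) (Ω : Set (En n)) (F : (En n → ℝ) →ₗ[ℝ] ℝ) : Prop :=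
  ∃ C : ℝ, ∀ u : En n → ℝ, MemW0 n s p Ω u → |F u| ≤ C * gagSem n s p u

/-- The nonlocal flux `q = a |D_{s,p}u|^{p−2} D_{s,p}u`. -/
def flux (n : ℕ) (s p : ℝ) (a : En n × En n → ℝ) (u : En n → ℝ) (z : En n × En n) : ℝ :=
  a z * |Dsp n s p u z| ^ (p - 2) * Dsp n s p u z

/-- `u` is the weak solution of the Dirichlet problem `ℒ_a u = f` in Ω, `u = 0` outside Ω. -/
def IsSol (n : ℕ) (s p : ℝ) (Ω : Set (En n)) (a : En n × En n → ℝ)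
    (F : (En n → ℝ) →ₗ[ℝ] ℝ) (u : En n → ℝ) : Prop :=
  MemW0 n s p Ω u ∧ ∀ v : En n → ℝ, MemW0 n s p Ω v →
    (1 / 2) * ∫ z : En n × En n, flux n s p a u z * Dsp n s p v z = F v

/-- Weak convergence in `W^{s,p}_0(Ω)`, tested against `L^{p'}` dual elements for
both the functions and their nonlocal gradients. -/
def WeakConvW0 (n : ℕ) (s p : ℝ) (uk : ℕ → En n → ℝ) (u : En n → ℝ) : Prop :=
  (∀ g : En n → ℝ, MemLp g (ENNReal.ofReal (p / (p - 1))) volume →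
    Tendsto (fun k => ∫ x, uk k x * g x) atTop (𝓝 (∫ x, u x * g x))) ∧
  (∀ ψ : En n × En n → ℝ, MemLp ψ (ENNReal.ofReal (p / (p - 1))) volume →
    Tendsto (fun k => ∫ z, Dsp n s p (uk k) z * ψ z) atTop
      (𝓝 (∫ z, Dsp n s p u z * ψ z)))

/-- Weak convergence of the fluxes in `L^{p'}(Ω×Ω)`, tested against `L^p` functions. -/
def WeakConvFlux (n : ℕ) (s p : ℝ) (Ω : Set (En n)) (qk : ℕ → En n × En n → ℝ)
    (q : En n × En n → ℝ) : Prop :=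
  ∀ ψ : En n × En n → ℝ, MemLp ψ (ENNReal.ofReal p) volume →
    Tendsto (fun k => ∫ z in Ω ×ˢ Ω, qk k z * ψ z) atTop
      (𝓝 (∫ z in Ω ×ˢ Ω, q z * ψ z))

/-- `ℒ_{a_k}` H-converges to `ℒ_a` (Definition 1): for every right-hand side,
states converge weakly in `W^{s,p}_0(Ω)` and fluxes weakly in `L^{p'}(Ω×Ω)`. -/
def HConv (n : ℕ) (s p : ℝ) (Ω : Set (En n)) (ak : ℕ → En n × En n → ℝ)
    (a : En n × En n → ℝ) : Prop :=
  ∀ F : (En n → ℝ) →ₗ[ℝ] ℝ, IsDualW0 n s p Ω F →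
    ∀ uk : ℕ → En n → ℝ, ∀ u : En n → ℝ,
      (∀ k, IsSol n s p Ω (ak k) F (uk k)) → IsSol n s p Ω a F u →
        WeakConvW0 n s p uk u ∧
        WeakConvFlux n s p Ω (fun k => flux n s p (ak k) (uk k)) (flux n s p a u)

/-- `ℒ_{a_k}` G-converges to `ℒ_a`: only weak convergence of the states is required. -/
def GConv (n : ℕ) (s p : ℝ) (Ω : Set (En n)) (ak : ℕ → En n × En n → ℝ)
    (a : En n × En n → ℝ) : Prop :=
  ∀ F : (En n → ℝ) →ₗ[ℝ] ℝ, IsDualW0 n s p Ω F →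
    ∀ uk : ℕ → En n → ℝ, ∀ u : En n → ℝ,
      (∀ k, IsSol n s p Ω (ak k) F (uk k)) → IsSol n s p Ω a F u →
        WeakConvW0 n s p uk u

/-- Weak-* convergence in `L^∞(ℝⁿ×ℝⁿ)`: convergence tested against all `L¹` functions. -/
def WeakStarLinf (n : ℕ) (ak : ℕ → En n × En n → ℝ) (a : En n × En n → ℝ) : Prop :=
  ∀ φ : En n × En n → ℝ, Integrable φ volume →
    Tendsto (fun k => ∫ z, ak k z * φ z) atTop (𝓝 (∫ z, a z * φ z))

/-- The nonlocal Dirichlet energy `I_a(v) = (1/(2p)) ∫∫ a|D_{s,p}v|^p − ⟨f,v⟩`. -/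
def Ifun (n : ℕ) (s p : ℝ) (a : En n × En n → ℝ) (F : (En n → ℝ) →ₗ[ℝ] ℝ)
    (v : En n → ℝ) : ℝ :=
  (1 / (2 * p)) * (∫ z : En n × En n, a z * |Dsp n s p v z| ^ p) - F v



private lemma simpleFunc_lintegral_tendsto_aux {X : Type*} [MeasurableSpace X]
    (ν : ℕ → Measure X) (ν0 : Measure X)
    (hset : ∀ E : Set X, MeasurableSet E → Tendsto (fun k => ν k E) atTop (𝓝 (ν0 E)))
    (φ : SimpleFunc X ℝ≥0∞) (hφ : ∀ x, φ x ≠ ∞) :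
    Tendsto (fun k => φ.lintegral (ν k)) atTop (𝓝 (φ.lintegral ν0)) := by
  simp only [SimpleFunc.lintegral]
  refine tendsto_finset_sum _ fun x hx => ?_
  obtain ⟨a, ha⟩ := SimpleFunc.mem_range.mp hx
  exact ENNReal.Tendsto.const_mul (hset _ (φ.measurableSet_preimage _))
    (Or.inr (ha ▸ hφ a))

private lemma lintegral_le_liminf_aux {X : Type*} [MeasurableSpace X]
    (ν : ℕ → Measure X) (ν0 : Measure X)
    (hset : ∀ E : Set X, MeasurableSet E → Tendsto (fun k => ν k E) atTop (𝓝 (ν0 E)))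
    {g : X → ℝ≥0∞} (hg : Measurable g) :
    ∫⁻ x, g x ∂ν0 ≤ atTop.liminf (fun k => ∫⁻ x, g x ∂(ν k)) := by
  rw [lintegral_eq_iSup_eapprox_lintegral hg]
  refine iSup_le fun n => ?_
  have h1 : Tendsto (fun k => (SimpleFunc.eapprox g n).lintegral (ν k)) atTop
      (𝓝 ((SimpleFunc.eapprox g n).lintegral ν0)) :=
    simpleFunc_lintegral_tendsto_aux ν ν0 hset _ fun x =>
      (SimpleFunc.eapprox_lt_top g n x).ne
  calc (SimpleFunc.eapprox g n).lintegral ν0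
      = atTop.liminf (fun k => (SimpleFunc.eapprox g n).lintegral (ν k)) :=
        h1.liminf_eq.symm
    _ ≤ atTop.liminf (fun k => ∫⁻ x, g x ∂(ν k)) := by
        refine liminf_le_liminf (Eventually.of_forall fun k => ?_)
        rw [← SimpleFunc.lintegral_eq_lintegral]
        exact lintegral_mono fun x => SimpleFunc.iSup_eapprox_apply hg x ▸
          le_iSup (fun n => SimpleFunc.eapprox g n x) n

theorem generalized_fatou_varying_measures
    {X : Type*} [MeasurableSpace X] (ν : ℕ → Measure X) (ν0 : Measure X)
    (hfin : ∀ k, IsFiniteMeasure (ν k)) (hfin0 : IsFiniteMeasure ν0)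
    (hset : ∀ E : Set X, MeasurableSet E → Tendsto (fun k => ν k E) atTop (𝓝 (ν0 E)))
    (f : ℕ → X → ℝ≥0∞) (f0 : X → ℝ≥0∞)
    (hmeas : ∀ k, Measurable (f k)) (hmeas0 : Measurable f0)
    (hae : ∀ᵐ x ∂ν0, Tendsto (fun k => f k x) atTop (𝓝 (f0 x))) :
    ∫⁻ x, f0 x ∂ν0 ≤ atTop.liminf (fun k => ∫⁻ x, f k x ∂(ν k)) := by
  set g : ℕ → X → ℝ≥0∞ := fun m x => ⨅ k ≥ m, f k x with hg
  have hgmeas : ∀ m, Measurable (g m) := fun m =>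
    Measurable.iInf fun k => Measurable.iInf fun _ => hmeas k
  have hmono : Monotone g := fun m m' hmm' x => by
    exact le_iInf₂ fun k hk => iInf₂_le k (hmm'.trans hk)
  have key : ∫⁻ x, f0 x ∂ν0 = ⨆ m, ∫⁻ x, g m x ∂ν0 := by
    rw [← lintegral_iSup hgmeas hmono]
    refine lintegral_congr_ae ?_
    filter_upwards [hae] with x hx
    rw [← hx.liminf_eq, liminf_eq_iSup_iInf_of_nat]
  rw [key]
  refine iSup_le fun m => ?_
  calc ∫⁻ x, g m x ∂ν0
      ≤ atTop.liminf (fun k => ∫⁻ x, g m x ∂(ν k)) :=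
        lintegral_le_liminf_aux ν ν0 hset (hgmeas m)
    _ ≤ atTop.liminf (fun k => ∫⁻ x, f k x ∂(ν k)) := by
        refine liminf_le_liminf ?_
        filter_upwards [eventually_ge_atTop m] with k hk
        exact lintegral_mono fun x => iInf₂_le k hk

end
end

section
/- Energy continuity under H-convergence: if ℒ_{a_k} H-converges to ℒ_a, then for every f ∈ W^{−s,p'}(Ω) the energies converge: ∫∫ a_k|D_{s,p}u_k|^p dx dy → ∫∫ a|D_{s,p}u|^p dx dy, where u_k, u are the respective solutions with right-hand side f. -/
open MeasureTheory Filter Topology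
open scoped ENNReal

noncomputable section

/-- Pointwise identity: `c * |x|^(p-2) * x * x = c * |x|^p`. -/
lemma aux_sq (p : ℝ) (hp : 1 < p) (c x : ℝ) : c * |x| ^ (p - 2) * x * x = c * |x| ^ p := by
  rcases eq_or_ne x 0 with rfl | hx
  · simp [Real.zero_rpow (by linarith : p ≠ 0)]
  · have h0 : (0:ℝ) < |x| := abs_pos.mpr hx
    have h2 : |x| * |x| = |x| ^ (2:ℝ) := by
      rw [show (2:ℝ) = ((2:ℕ):ℝ) by norm_num, Real.rpow_natCast]; ring
    have h3 : |x| ^ (p - 2) * (|x| * |x|) = |x| ^ p := by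
      rw [h2, ← Real.rpow_add h0]; norm_num
    calc c * |x| ^ (p - 2) * x * x = c * (|x| ^ (p - 2) * (|x| * |x|)) := by
          rw [abs_mul_abs_self]; ring
      _ = c * |x| ^ p := by rw [h3]

/-- `|D_{s,p}u|^p` equals the Gagliardo integrand. -/
lemma aux_gag (n : ℕ) (s p : ℝ) (hp : 1 < p) (u : En n → ℝ) (z : En n × En n) :
    |Dsp n s p u z| ^ p = |u z.1 - u z.2| ^ p / ‖z.1 - z.2‖ ^ ((n:ℝ) + s * p) := by
  have hp0 : p ≠ 0 := by linarith
  have hB : (0:ℝ) ≤ ‖z.1 - z.2‖ := norm_nonneg _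
  rw [Dsp, abs_div, abs_of_nonneg (Real.rpow_nonneg hB _),
    Real.div_rpow (abs_nonneg _) (Real.rpow_nonneg hB _), ← Real.rpow_mul hB]
  congr 2
  field_simp

/-- The nonlocal gradient of an a.e. measurable function is a.e. measurable. -/
lemma aux_meas (n : ℕ) (s p : ℝ) (u : En n → ℝ) (hu : AEMeasurable u volume) :
    AEMeasurable (Dsp n s p u) (volume : Measure (En n × En n)) := by
  have h1 : AEMeasurable (fun z : En n × En n => u z.1) volume := by
    rw [MeasureTheory.Measure.volume_eq_prod]
    exact hu.comp_quasiMeasurePreserving MeasureTheory.Measure.quasiMeasurePreserving_fst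
  have h2 : AEMeasurable (fun z : En n × En n => u z.2) volume := by
    rw [MeasureTheory.Measure.volume_eq_prod]
    exact hu.comp_quasiMeasurePreserving MeasureTheory.Measure.quasiMeasurePreserving_snd
  have hm : Measurable (fun z : En n × En n => ‖z.1 - z.2‖ ^ ((n:ℝ)/p + s)) :=
    ((measurable_fst.sub measurable_snd).norm).pow measurable_const
  exact (h1.sub h2).div hm.aemeasurable

/-- The flux of a `W^{s,p}` function with bounded coefficient lies in `L^{p'}`. -/
lemma aux_flux_memLp (n : ℕ) (s p lam Lam : ℝ) (hp : 1 < p) (hlam : 0 < lam)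
    (a : En n × En n → ℝ) (ha : MemA n lam Lam a) (u : En n → ℝ)
    (hu1 : AEMeasurable u volume)
    (hu2 : Integrable (fun z : En n × En n =>
      |u z.1 - u z.2| ^ p / ‖z.1 - z.2‖ ^ ((n:ℝ) + s * p)) volume) :
    MemLp (flux n s p a u) (ENNReal.ofReal (p / (p - 1))) volume := by
  have hp1 : (0:ℝ) < p - 1 := by linarith
  set p' : ℝ := p / (p - 1) with hp'def
  have hp'pos : 0 < p' := by positivity
  have hq0 : ENNReal.ofReal p' ≠ 0 := ne_of_gt (ENNReal.ofReal_pos.mpr hp'pos)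
  have hqt : ENNReal.ofReal p' ≠ ∞ := ENNReal.ofReal_ne_top
  have hx := aux_meas n s p u hu1
  have hψae : AEMeasurable (flux n s p a u) volume := by
    have : flux n s p a u =
        fun z => a z * |Dsp n s p u z| ^ (p - 2) * Dsp n s p u z := rfl
    rw [this]
    exact (ha.1.aemeasurable.mul ((measurable_abs.comp_aemeasurable hx).pow aemeasurable_const)).mul hx
  have hψsm := hψae.aestronglyMeasurable
  have hint : Integrable (fun z : En n × En n => ‖flux n s p a u z‖ ^ p') volume := by
    have hg : Integrable (fun z : En n × En n =>
        Lam ^ p' * (|u z.1 - u z.2| ^ p / ‖z.1 - z.2‖ ^ ((n:ℝ) + s * p))) volume :=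
      hu2.const_mul _
    refine hg.mono ((hψae.norm.pow aemeasurable_const).aestronglyMeasurable) ?_
    filter_upwards [ha.2] with z hz
    obtain ⟨-, hz1, hz2⟩ := hz
    have ha0 : (0:ℝ) ≤ a z := le_trans hlam.le hz1
    set x := Dsp n s p u z with hxdef
    have hgag : |x| ^ p = |u z.1 - u z.2| ^ p / ‖z.1 - z.2‖ ^ ((n:ℝ) + s * p) :=
      aux_gag n s p hp u z
    have hxge : (0:ℝ) ≤ |x| ^ p := Real.rpow_nonneg (abs_nonneg _) _
    have hfl : ‖flux n s p a u z‖ = a z * |x| ^ (p - 2) * |x| := by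
      rw [Real.norm_eq_abs, flux, abs_mul, abs_mul, abs_of_nonneg ha0,
        abs_of_nonneg (Real.rpow_nonneg (abs_nonneg _) _)]
    have hbound : ‖flux n s p a u z‖ ^ p' ≤ Lam ^ p' * |x| ^ p := by
      rcases eq_or_ne x 0 with h0 | h0
      · rw [hfl, h0]
        simp only [abs_zero, mul_zero]
        rw [Real.zero_rpow (ne_of_gt hp'pos)]
        have hL : (0:ℝ) ≤ Lam := le_trans ha0 hz2
        positivity
      · have habs : (0:ℝ) < |x| := abs_pos.mpr h0
        have hstep : a z * |x| ^ (p - 2) * |x| = a z * |x| ^ (p - 1) := by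
          rw [mul_assoc]
          congr 1
          rw [show |x| ^ (p - 2) * |x| = |x| ^ (p - 2) * |x| ^ (1:ℝ) by rw [Real.rpow_one],
            ← Real.rpow_add habs]
          congr 1
          ring
        have hexp : (p - 1) * p' = p := by
          rw [hp'def]; field_simp
        rw [hfl, hstep, Real.mul_rpow ha0 (Real.rpow_nonneg (abs_nonneg _) _),
          ← Real.rpow_mul (abs_nonneg _), hexp]
        exact mul_le_mul_of_nonneg_right (Real.rpow_le_rpow ha0 hz2 hp'pos.le) hxge
    have hqnn : (0:ℝ) ≤ |u z.1 - u z.2| ^ p / ‖z.1 - z.2‖ ^ ((n:ℝ) + s * p) := by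
      rw [← hgag]; exact hxge
    calc ‖‖flux n s p a u z‖ ^ p'‖ = ‖flux n s p a u z‖ ^ p' := by
          rw [Real.norm_eq_abs, abs_of_nonneg (Real.rpow_nonneg (norm_nonneg _) _)]
      _ ≤ Lam ^ p' * |x| ^ p := hbound
      _ = ‖Lam ^ p' * (|u z.1 - u z.2| ^ p / ‖z.1 - z.2‖ ^ ((n:ℝ) + s * p))‖ := by
          have hL : (0:ℝ) ≤ Lam := le_trans ha0 hz2
          have hnn : (0:ℝ) ≤ Lam ^ p' * (|u z.1 - u z.2| ^ p / ‖z.1 - z.2‖ ^ ((n:ℝ) + s * p)) := by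
            positivity
          rw [hgag, Real.norm_eq_abs, abs_of_nonneg hnn]
  have hdiv : ENNReal.ofReal p' / ENNReal.ofReal p' = 1 := ENNReal.div_self hq0 hqt
  have hL1 : MemLp (fun z : En n × En n =>
      ‖flux n s p a u z‖ ^ (ENNReal.ofReal p').toReal)
      (ENNReal.ofReal p' / ENNReal.ofReal p') volume := by
    rw [hdiv]
    simp only [ENNReal.toReal_ofReal hp'pos.le]
    exact (memLp_one_iff_integrable).mpr hint
  exact (memLp_norm_rpow_iff hψsm hq0 hqt).mp hL1


theorem energy_continuity_under_HConv
    (n : ℕ) (s p lam Lam : ℝ) (hp : 1 < p) (hs : s ∈ Set.Ioo (0:ℝ) 1)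
    (hlam : 0 < lam) (hlL : lam ≤ Lam)
    (Ω : Set (En n)) (hΩm : MeasurableSet Ω) (hΩb : Bornology.IsBounded Ω)
    (ak : ℕ → En n × En n → ℝ) (hak : ∀ k, MemA n lam Lam (ak k))
    (a : En n × En n → ℝ) (ha : MemA n lam Lam a)
    (hH : HConv n s p Ω ak a)
    (F : (En n → ℝ) →ₗ[ℝ] ℝ) (hF : IsDualW0 n s p Ω F)
    (uk : ℕ → En n → ℝ) (u : En n → ℝ)
    (huk : ∀ k, IsSol n s p Ω (ak k) F (uk k)) (hu : IsSol n s p Ω a F u) :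
    Tendsto (fun k => ∫ z : En n × En n, ak k z * |Dsp n s p (uk k) z| ^ p) atTop
      (𝓝 (∫ z : En n × En n, a z * |Dsp n s p u z| ^ p)) := by
  have hψ : MemLp (flux n s p a u) (ENNReal.ofReal (p / (p - 1))) volume :=
    aux_flux_memLp n s p lam Lam hp hlam a ha u hu.1.1.1.1.aemeasurable
      (by
        have := hu.1.1.2
        simpa using this)
  have hW := (hH F hF uk u huk hu).1.2 (flux n s p a u) hψ
  have e1 : ∀ k, (∫ z : En n × En n, Dsp n s p (uk k) z * flux n s p a u z)
      = ∫ z : En n × En n, ak k z * |Dsp n s p (uk k) z| ^ p := by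
    intro k
    have hFk1 : (1 / 2 : ℝ) * ∫ z : En n × En n,
        flux n s p a u z * Dsp n s p (uk k) z = F (uk k) :=
      hu.2 (uk k) (huk k).1
    have hFk2 : (1 / 2 : ℝ) * ∫ z : En n × En n,
        flux n s p (ak k) (uk k) z * Dsp n s p (uk k) z = F (uk k) :=
      (huk k).2 (uk k) (huk k).1
    have c1 : (∫ z : En n × En n, Dsp n s p (uk k) z * flux n s p a u z)
        = ∫ z : En n × En n, flux n s p a u z * Dsp n s p (uk k) z := by
      congr 1; funext z; ring
    have c2 : (∫ z : En n × En n, flux n s p (ak k) (uk k) z * Dsp n s p (uk k) z)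
        = ∫ z : En n × En n, ak k z * |Dsp n s p (uk k) z| ^ p := by
      congr 1; funext z
      show ak k z * |Dsp n s p (uk k) z| ^ (p - 2) * Dsp n s p (uk k) z
        * Dsp n s p (uk k) z = _
      exact aux_sq p hp _ _
    rw [c1, ← c2]
    linarith
  have e2 : (∫ z : En n × En n, Dsp n s p u z * flux n s p a u z)
      = ∫ z : En n × En n, a z * |Dsp n s p u z| ^ p := by
    congr 1; funext z
    rw [mul_comm]
    show a z * |Dsp n s p u z| ^ (p - 2) * Dsp n s p u z * Dsp n s p u z = _
    exact aux_sq p hp _ _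
  have hW' : Tendsto (fun k => ∫ z : En n × En n, Dsp n s p (uk k) z * flux n s p a u z)
      atTop (𝓝 (∫ z : En n × En n, a z * |Dsp n s p u z| ^ p)) := e2 ▸ hW
  exact hW'.congr e1

end
end
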